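/- For all real parameters v and c, the point P₅ = (1,0,0) is an equilibrium of the reduced replicator vector field, i.e. F_{v,c}(1,0,0) = (0,0,0), and the characteristic polynomial of the Jacobian matrix J(1,0,0) equals (X − (c−v)/2)·(X − (c−v)/4)². -/

import Mathlib

open Polynomial

noncomputable section

/-- The reduced replicator vector field of the asymmetric Hawk-Dove game. -/
def F (v c : ℝ) (p : Fin 3 → ℝ) : Fin 3 → ℝ :=
  ![ (1/4) * p 0 * (c * (2*(p 0)^2 + 2*(p 0)*(p 1 + p 2 - 1) + 2*(p 1)*(p 2) - p 1 - p 2)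
        - v * (2*(p 0) + p 1 + p 2 - 2)),
     -(1/4) * p 1 * (v * (2*(p 0) + p 1 + p 2 - 1) - c * (2*(p 0) + 2*(p 1) - 1) * (p 0 + p 2)),
     -(1/4) * p 2 * (v * (2*(p 0) + p 1 + p 2 - 1) - c * (p 0 + p 1) * (2*(p 0) + 2*(p 2) - 1)) ]

/-- The Jacobian matrix of `F v c` at `p`: the matrix of the Fréchet derivative
with respect to the standard basis. -/
def J (v c : ℝ) (p : Fin 3 → ℝ) : Matrix (Fin 3) (Fin 3) ℝ :=
  Matrix.of fun i j => fderiv ℝ (F v c) p (Pi.single j 1) i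

theorem equilibrium_P5_charpoly (v c : ℝ) :
    F v c ![1, 0, 0] = 0 ∧
    (J v c ![1, 0, 0]).charpoly
      = (X - C ((c - v)/2)) * (X - C ((c - v)/4))^2 := by
  set x : Fin 3 → ℝ := ![1, 0, 0] with hx
  constructor
  · funext i
    fin_cases i <;> simp [F, x] <;> ring
  · -- the explicit Jacobian matrix
    set M : Matrix (Fin 3) (Fin 3) ℝ :=
      !![(c-v)/2, (c-v)/4, (c-v)/4; 0, (c-v)/4, 0; 0, 0, (c-v)/4] with hM
    -- the candidate derivative as a continuous linear map
    set L : (Fin 3 → ℝ) →L[ℝ] (Fin 3 → ℝ) :=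
      (Matrix.toLin' M).toContinuousLinearMap with hL
    have h0 : HasFDerivAt (𝕜 := ℝ) (fun p : Fin 3 → ℝ => p 0) (ContinuousLinearMap.proj (0 : Fin 3)) x :=
      hasFDerivAt_apply (𝕜 := ℝ) (0 : Fin 3) x
    have h1 : HasFDerivAt (𝕜 := ℝ) (fun p : Fin 3 → ℝ => p 1) (ContinuousLinearMap.proj (1 : Fin 3)) x :=
      hasFDerivAt_apply (𝕜 := ℝ) (1 : Fin 3) x
    have h2 : HasFDerivAt (𝕜 := ℝ) (fun p : Fin 3 → ℝ => p 2) (ContinuousLinearMap.proj (2 : Fin 3)) x :=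
      hasFDerivAt_apply (𝕜 := ℝ) (2 : Fin 3) x
    have hsq : HasFDerivAt (𝕜 := ℝ) (fun p : Fin 3 → ℝ => (p 0)^2)
        ((x 0) • ContinuousLinearMap.proj (0 : Fin 3) + (x 0) • ContinuousLinearMap.proj (0 : Fin 3)) x := by
      simpa only [pow_two, Pi.mul_def] using h0.mul h0
    have hA := ((((hsq.const_mul 2).add ((h0.const_mul 2).mul ((h1.add h2).sub_const 1))).add
      ((h1.const_mul 2).mul h2)).sub h1).sub h2
    have hB := (((h0.const_mul 2).add h1).add h2).sub_const (2:ℝ)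
    have hB1 := (((h0.const_mul 2).add h1).add h2).sub_const (1:ℝ)
    have hF0 := (h0.const_mul ((1:ℝ)/4)).mul ((hA.const_mul c).sub (hB.const_mul v))
    have hF1 := (h1.const_mul (-(1/4) : ℝ)).mul ((hB1.const_mul v).sub
      ((((((h0.const_mul 2).add (h1.const_mul 2)).sub_const (1:ℝ)).const_mul c)).mul (h0.add h2)))
    have hF2 := (h2.const_mul (-(1/4) : ℝ)).mul ((hB1.const_mul v).sub
      (((h0.add h1).const_mul c).mul (((h0.const_mul 2).add (h2.const_mul 2)).sub_const (1:ℝ))))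
    have hF : HasFDerivAt (F v c) L x := by
      rw [hasFDerivAt_pi']
      intro i
      fin_cases i
      · refine hF0.congr_fderiv ?_
        ext u
        simp [hL, hM, hx, Matrix.toLin'_apply, Matrix.mulVec, dotProduct,
          Fin.sum_univ_three]
        ring
      · refine hF1.congr_fderiv ?_
        ext u
        simp [hL, hM, hx, Matrix.toLin'_apply, Matrix.mulVec, dotProduct,
          Fin.sum_univ_three]
        ring
      · refine hF2.congr_fderiv ?_
        ext u
        simp [hL, hM, hx, Matrix.toLin'_apply, Matrix.mulVec, dotProduct,
          Fin.sum_univ_three]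
        ring
    have hJ : J v c x = M := by
      ext i j
      simp only [J, Matrix.of_apply, hF.fderiv]
      fin_cases i <;> fin_cases j <;>
        simp [hL, hM, Matrix.toLin'_apply, Matrix.mulVec, dotProduct,
          Fin.sum_univ_three, Pi.single_apply, Matrix.vecHead, Matrix.vecTail]
    have e00 : Matrix.charmatrix M 0 0 = X - C ((c-v)/2) := by
      rw [Matrix.charmatrix_apply_eq, hM]; norm_num [Matrix.vecHead, Matrix.vecTail]
    have e11 : Matrix.charmatrix M 1 1 = X - C ((c-v)/4) := by
      rw [Matrix.charmatrix_apply_eq, hM]; norm_num [Matrix.vecHead, Matrix.vecTail]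
    have e22 : Matrix.charmatrix M 2 2 = X - C ((c-v)/4) := by
      rw [Matrix.charmatrix_apply_eq, hM]; norm_num [Matrix.vecHead, Matrix.vecTail, Matrix.cons_val_two]
    have e01 : Matrix.charmatrix M 0 1 = -C ((c-v)/4) := by
      rw [Matrix.charmatrix_apply_ne _ _ _ (by decide), hM]; norm_num [Matrix.vecHead, Matrix.vecTail]
    have e02 : Matrix.charmatrix M 0 2 = -C ((c-v)/4) := by
      rw [Matrix.charmatrix_apply_ne _ _ _ (by decide), hM]; norm_num [Matrix.vecHead, Matrix.vecTail, Matrix.cons_val_two]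
    have e10 : Matrix.charmatrix M 1 0 = 0 := by
      rw [Matrix.charmatrix_apply_ne _ _ _ (by decide), hM]; norm_num [Matrix.vecHead, Matrix.vecTail]
    have e12 : Matrix.charmatrix M 1 2 = 0 := by
      rw [Matrix.charmatrix_apply_ne _ _ _ (by decide), hM]; norm_num [Matrix.vecHead, Matrix.vecTail, Matrix.cons_val_two]
    have e20 : Matrix.charmatrix M 2 0 = 0 := by
      rw [Matrix.charmatrix_apply_ne _ _ _ (by decide), hM]; norm_num [Matrix.vecHead, Matrix.vecTail, Matrix.cons_val_two]
    have e21 : Matrix.charmatrix M 2 1 = 0 := by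
      rw [Matrix.charmatrix_apply_ne _ _ _ (by decide), hM]; norm_num [Matrix.vecHead, Matrix.vecTail, Matrix.cons_val_two]
    rw [hJ, Matrix.charpoly, Matrix.det_fin_three,
      e00, e11, e22, e01, e02, e10, e12, e20, e21]
    ring
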